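/- arXiv:1402.0402 — 2 statements merged into one kernel-verified Lean document; each statement's English description precedes it below -/
import Mathlib

section
/- Let u and v be distinct vertices of G and let P be a path in G from u to v such that every internal vertex of P has rank strictly smaller than both π⁻¹(u) and π⁻¹(v). Then {u,v} is an edge of the contraction hierarchy G*π. -/
open SimpleGraph
open scoped ENNReal

variable {V : Type*}

/-- One step of vertex contraction: remove `v` from the current graph and add an edge
between every pair of its current neighbors. -/
def chStep (H : SimpleGraph V) (v : V) : SimpleGraph V where
  Adj a b := a ≠ b ∧ a ≠ v ∧ b ≠ v ∧ (H.Adj a b ∨ (H.Adj v a ∧ H.Adj v b))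
  symm := ⟨by
    rintro a b ⟨h1, h2, h3, h4⟩
    refine ⟨h1.symm, h3, h2, ?_⟩
    rcases h4 with h | ⟨ha, hb⟩
    · exact Or.inl h.symm
    · exact Or.inr ⟨hb, ha⟩⟩
  loopless := ⟨fun a h => h.1 rfl⟩

/-- All edges ever present while contracting the vertices of the list in order:
the edges of the initial graph together with all added shortcuts. -/
def chList : SimpleGraph V → List V → SimpleGraph V
  | H, [] => H
  | H, v :: l => H ⊔ chList (chStep H v) l

/-- The rank of a vertex with respect to the contraction order `π`. -/
def rk {n : ℕ} (π : Fin n ≃ V) (v : V) : ℕ := (π.symm v : ℕ)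

/-- The contraction hierarchy `G*π`: contract `π 0, π 1, …` in this order and collect
all original edges and all added shortcuts. -/
def chGraph {n : ℕ} (G : SimpleGraph V) (π : Fin n ≃ V) : SimpleGraph V :=
  chList G ((List.finRange n).map ⇑π)

/-- A list of vertices is up-down w.r.t. a rank function: ranks strictly increase
along a prefix and strictly decrease along the remaining suffix, the two parts
meeting at the maximum-rank vertex. -/
def IsUpDown (r : V → ℕ) (l : List V) : Prop :=
  ∃ l₁ x l₂, l = l₁ ++ x :: l₂ ∧
    List.Chain' (fun a b => r a < r b) (l₁ ++ [x]) ∧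
    List.Chain' (fun a b => r b < r a) (x :: l₂)

/-- Reachability in the upward directed graph `G^∧π` (edges of `G*π` directed from
lower to higher rank): the vertex set of the search space `SS v`. -/
def UpReach {n : ℕ} (G : SimpleGraph V) (π : Fin n ≃ V) (v u : V) : Prop :=
  Relation.ReflTransGen (fun a b => (chGraph G π).Adj a b ∧ rk π a < rk π b) v u

/-- Length of a walk: the sum of the weights of its edges. -/
noncomputable def wlen {H : SimpleGraph V} (m : V → V → ℝ≥0∞) {s t : V}
    (p : H.Walk s t) : ℝ≥0∞ :=
  (p.darts.map (fun d => m d.toProd.1 d.toProd.2)).sum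

/-- Shortest path distance in a graph `H` under edge weights `m`. -/
noncomputable def gdist (H : SimpleGraph V) (m : V → V → ℝ≥0∞) (s t : V) : ℝ≥0∞ :=
  ⨅ (p : H.Walk s t), wlen m p

/-- Minimum length of an up-down `s`-`t` path in `G*π`. -/
noncomputable def updist {n : ℕ} (G : SimpleGraph V) (π : Fin n ≃ V)
    (m : V → V → ℝ≥0∞) (s t : V) : ℝ≥0∞ :=
  ⨅ (p : (chGraph G π).Walk s t) (_ : IsUpDown (rk π) p.support), wlen m p

/-- Minimum length of a strictly rank-increasing `u`-`v` path in `G*π`. -/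
noncomputable def upOnlyDist {n : ℕ} (G : SimpleGraph V) (π : Fin n ≃ V)
    (m : V → V → ℝ≥0∞) (u v : V) : ℝ≥0∞ :=
  ⨅ (p : (chGraph G π).Walk u v)
    (_ : List.Chain' (fun a b => rk π a < rk π b) p.support), wlen m p

/-- `S` is a balanced separator of the subgraph of `G` induced by `U`. -/
def IsBalancedSepOn [DecidableEq V] (G : SimpleGraph V) (U S : Finset V) : Prop :=
  S ⊆ U ∧ ∃ A B : Finset V, A ⊆ U ∧ B ⊆ U ∧
    Disjoint A B ∧ Disjoint A S ∧ Disjoint B S ∧ A ∪ B ∪ S = U ∧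
    (∀ a ∈ A, ∀ b ∈ B, ¬ G.Adj a b) ∧
    3 * A.card ≤ 2 * U.card ∧ 3 * B.card ≤ 2 * U.card

/-- Nested dissection orders (as lists, earliest contracted first, separator last)
of induced subgraphs of `G`, in which the separator chosen at every recursion step on
a `k`-vertex subgraph is balanced and has cardinality at most `c * k ^ α`. -/
inductive IsNDOrder [DecidableEq V] (G : SimpleGraph V) (c α : ℝ) : Finset V → List V → Prop
  | empty : IsNDOrder G c α ∅ []
  | step {U S A B : Finset V} {lA lB lS : List V} :
      Disjoint A B → Disjoint A S → Disjoint B S → A ∪ B ∪ S = U →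
      (∀ a ∈ A, ∀ b ∈ B, ¬ G.Adj a b) →
      3 * A.card ≤ 2 * U.card → 3 * B.card ≤ 2 * U.card →
      ((S.card : ℝ) ≤ c * (U.card : ℝ) ^ α) →
      lS.Nodup → lS.toFinset = S →
      IsNDOrder G c α A lA → IsNDOrder G c α B lB →
      IsNDOrder G c α U (lA ++ lB ++ lS)

/-- Number of vertices of the search space `SS v` in `G^∧π`. -/
noncomputable def nVertsSS {n : ℕ} (G : SimpleGraph V) (π : Fin n ≃ V) (v : V) : ℕ :=
  {u | UpReach G π v u}.ncard

/-- Number of arcs of the search space `SS v` in `G^∧π`: arcs of `G^∧π` with both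
endpoints reachable from `v`. -/
noncomputable def nArcsSS {n : ℕ} (G : SimpleGraph V) (π : Fin n ≃ V) (v : V) : ℕ :=
  {q : V × V | (chGraph G π).Adj q.1 q.2 ∧ rk π q.1 < rk π q.2 ∧
    UpReach G π v q.1 ∧ UpReach G π v q.2}.ncard

/-- The rank sequence of a walk: for each edge, the minimum of the ranks of its
endpoints, sorted in decreasing order. -/
def rankSeq {H : SimpleGraph V} (r : V → ℕ) {s t : V} (p : H.Walk s t) : List ℕ :=
  (p.darts.map (fun d => min (r d.toProd.1) (r d.toProd.2))).insertionSort (· ≥ ·)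

/-- Directed length of a walk in `G*π` under a pair of directed metrics `(mu, md)`:
each edge traversed from lower rank to higher rank costs its upward weight,
each edge traversed from higher rank to lower rank costs its downward weight. -/
noncomputable def dlen {H : SimpleGraph V} (r : V → ℕ) (mu md : V → V → ℝ≥0∞)
    {s t : V} (p : H.Walk s t) : ℝ≥0∞ :=
  (p.darts.map (fun d =>
    if r d.toProd.1 < r d.toProd.2 then mu d.toProd.1 d.toProd.2
    else md d.toProd.2 d.toProd.1)).sum

/-- Length of a directed walk `s :: l` under arc weights `wD`. -/
noncomputable def dWalkLen (wD : V → V → ℝ≥0∞) : V → List V → ℝ≥0∞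
  | _, [] => 0
  | s, x :: l => wD s x + dWalkLen wD x l

/-- Shortest directed path distance in the directed graph `D` under arc weights `wD`. -/
noncomputable def ddist (D : V → V → Prop) (wD : V → V → ℝ≥0∞) (s t : V) : ℝ≥0∞ :=
  ⨅ (l : List V) (_ : List.Chain D s l ∧ l.getLastD s = t), dWalkLen wD s l

lemma le_chList (H : SimpleGraph V) (l : List V) : H ≤ chList H l := by
  cases l with
  | nil => exact le_rfl
  | cons w l => exact le_sup_left

lemma chList_mono_append (H : SimpleGraph V) (l l' : List V) :
    chList H l ≤ chList H (l ++ l') := by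
  induction l generalizing H with
  | nil => exact le_chList H l'
  | cons w l ih => exact sup_le_sup_left (ih _) H

lemma exists_path_chStep (w : V) : ∀ (N : ℕ) {H : SimpleGraph V} {u v : V}
    (P : H.Walk u v), P.length ≤ N → P.IsPath → u ≠ w → v ≠ w →
    ∃ Q : (chStep H w).Walk u v, Q.IsPath ∧ (∀ x ∈ Q.support, x ∈ P.support)
      ∧ w ∉ Q.support := by
  intro N
  induction N with
  | zero =>
    intro H u v P hlen hP hu hv
    cases P with
    | nil => exact ⟨.nil, by simp, by simp, by simpa using Ne.symm hu⟩
    | cons h P' => rw [Walk.length_cons] at hlen; omega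
  | succ N ih =>
    intro H u v P hlen hP hu hv
    cases P with
    | nil => exact ⟨.nil, by simp, by simp, by simpa using Ne.symm hu⟩
    | @cons _ x _ h P' =>
      rw [Walk.length_cons] at hlen
      rw [Walk.cons_isPath_iff] at hP
      obtain ⟨hP', huP'⟩ := hP
      by_cases hxw : x = w
      · subst hxw
        cases P' with
        | nil => exact absurd rfl hv
        | @cons _ y _ h2 P'' =>
          rw [Walk.length_cons] at hlen
          rw [Walk.cons_isPath_iff] at hP'
          obtain ⟨hP'', hwP''⟩ := hP'
          rw [Walk.support_cons] at huP'
          simp only [List.mem_cons, not_or] at huP'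
          have huy : u ≠ y := fun e => huP'.2 (e ▸ P''.start_mem_support)
          have hyw : y ≠ x := fun e => hwP'' (e ▸ P''.start_mem_support)
          obtain ⟨Q'', hQ'', hsub, hwQ⟩ := ih P'' (by omega) hP'' hyw hv
          have hadj : (chStep H x).Adj u y := ⟨huy, hu, hyw, Or.inr ⟨h.symm, h2⟩⟩
          refine ⟨.cons hadj Q'', ?_, ?_, ?_⟩
          · rw [Walk.cons_isPath_iff]
            exact ⟨hQ'', fun hm => huP'.2 (hsub u hm)⟩
          · intro z hz
            rw [Walk.support_cons, List.mem_cons] at hz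
            rcases hz with rfl | hz
            · simp
            · have := hsub z hz
              simp only [Walk.support_cons, List.mem_cons] at this ⊢
              tauto
          · rw [Walk.support_cons]
            simp only [List.mem_cons, not_or]
            exact ⟨Ne.symm hu, hwQ⟩
      · obtain ⟨Q', hQ', hsub, hwQ⟩ := ih P' (by omega) hP' hxw hv
        have hux : u ≠ x := fun e => huP' (e ▸ P'.start_mem_support)
        have hadj : (chStep H w).Adj u x := ⟨hux, hu, hxw, Or.inl h⟩
        refine ⟨.cons hadj Q', ?_, ?_, ?_⟩
        · rw [Walk.cons_isPath_iff]
          exact ⟨hQ', fun hm => huP' (hsub u hm)⟩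
        · intro z hz
          rw [Walk.support_cons, List.mem_cons] at hz
          rcases hz with rfl | hz
          · simp
          · have := hsub z hz
            simp only [Walk.support_cons, List.mem_cons]
            tauto
        · rw [Walk.support_cons]
          simp only [List.mem_cons, not_or]
          exact ⟨Ne.symm hu, hwQ⟩

lemma chList_adj_of_path : ∀ (l : List V) (H : SimpleGraph V) {u v : V}
    (hne : u ≠ v) (hu : u ∉ l) (hv : v ∉ l) (P : H.Walk u v) (hP : P.IsPath)
    (hint : ∀ x ∈ P.support, x ≠ u → x ≠ v → x ∈ l), (chList H l).Adj u v := by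
  intro l
  induction l with
  | nil =>
    intro H u v hne hu hv P hP hint
    cases P with
    | nil => exact absurd rfl hne
    | @cons _ x _ h P' =>
      rw [Walk.cons_isPath_iff] at hP
      have hux : u ≠ x := fun e => hP.2 (e ▸ P'.start_mem_support)
      by_cases hxv : x = v
      · exact hxv ▸ h
      · exact absurd (hint x (by simp) (Ne.symm hux) hxv) (by simp)
  | cons w l ih =>
    intro H u v hne hu hv P hP hint
    simp only [List.mem_cons, not_or] at hu hv
    obtain ⟨Q, hQ, hsub, hwQ⟩ := exists_path_chStep w P.length P le_rfl hP hu.1 hv.1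
    show (H ⊔ chList (chStep H w) l).Adj u v
    refine Or.inr (ih (chStep H w) hne hu.2 hv.2 Q hQ ?_)
    intro x hx hxu hxv
    have hm := hint x (hsub x hx) hxu hxv
    rw [List.mem_cons] at hm
    rcases hm with rfl | hm
    · exact absurd hx hwQ
    · exact hm

lemma mem_take_finRange {n m : ℕ} (i : Fin n) :
    i ∈ (List.finRange n).take m ↔ (i : ℕ) < m := by
  rw [List.mem_take_iff_getElem]
  constructor
  · rintro ⟨j, hj, rfl⟩
    simp [List.getElem_finRange]
    omega
  · intro h
    exact ⟨i, by simp [List.getElem_finRange, Fin.eta]; omega,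
      by simp [List.getElem_finRange, Fin.eta]⟩

lemma mem_take_finRange_map {n m : ℕ} (π : Fin n ≃ V) (x : V) :
    x ∈ (((List.finRange n).map ⇑π).take m) ↔ ((π.symm x : Fin n) : ℕ) < m := by
  rw [← List.map_take, List.mem_map]
  constructor
  · rintro ⟨i, hi, rfl⟩
    simpa using (mem_take_finRange i).mp hi
  · intro h
    exact ⟨π.symm x, (mem_take_finRange _).mpr h, by simp⟩


/-- If `P` is a `u`-`v` path in `G` all of whose internal vertices have
rank strictly smaller than both the rank of `u` and the rank of `v`, then `{u, v}`
is an edge of the contraction hierarchy `G*π`. -/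
theorem stmt0 {V : Type*} {n : ℕ} (G : SimpleGraph V) (hG : G.Connected)
    (π : Fin n ≃ V) (u v : V) (huv : u ≠ v)
    (P : G.Walk u v) (hP : P.IsPath)
    (hint : ∀ x ∈ P.support, x ≠ u → x ≠ v → rk π x < rk π u ∧ rk π x < rk π v) :
    (chGraph G π).Adj u v := by
  have key : (chList G (((List.finRange n).map ⇑π).take (min (rk π u) (rk π v)))).Adj u v := by
    apply chList_adj_of_path _ _ huv ?_ ?_ P hP ?_
    · rw [mem_take_finRange_map]
      unfold rk
      omega
    · rw [mem_take_finRange_map]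
      unfold rk
      omega
    · intro x hx hxu hxv
      have h1 := (hint x hx hxu hxv).1
      have h2 := (hint x hx hxu hxv).2
      rw [mem_take_finRange_map]
      unfold rk at h1 h2 ⊢
      omega
  have hle := chList_mono_append G (((List.finRange n).map ⇑π).take (min (rk π u) (rk π v)))
    (((List.finRange n).map ⇑π).drop (min (rk π u) (rk π v)))
  rw [List.take_append_drop] at hle
  exact hle key
end

section
/- Let G be connected and let s be the cardinality of a minimum balanced separator of G. Then for every contraction order π: (i) there exists a vertex whose search space SS(v) in G^∧π contains at least s vertices and at least s(s−1)/2 arcs; (ii) the average over all n vertices v of the number of vertices in SS(v) is at least s/3, and the average number of arcs in SS(v) is at least s(s−1)/6. -/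
open SimpleGraph
open scoped ENNReal

variable {V : Type*}

lemma chStep_adj (H : SimpleGraph V) (v a b : V) :
    (chStep H v).Adj a b ↔ (a ≠ b ∧ a ≠ v ∧ b ≠ v ∧ (H.Adj a b ∨ (H.Adj v a ∧ H.Adj v b))) :=
  Iff.rfl

section CH
variable {V : Type*}

lemma chList_adj_iff (H : SimpleGraph V) (l : List V) (a b : V) :
    (chList H l).Adj a b ↔ ∃ t : List V, t.IsPrefix l ∧ (t.foldl chStep H).Adj a b := by
  induction l generalizing H with
  | nil =>
    simp only [chList]
    constructor
    · intro h; exact ⟨[], List.prefix_refl _, h⟩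
    · rintro ⟨t, ht, h⟩
      rw [List.prefix_nil.mp ht] at h; exact h
  | cons v l ih =>
    simp only [chList, SimpleGraph.sup_adj]
    constructor
    · rintro (h | h)
      · exact ⟨[], List.nil_prefix, h⟩
      · obtain ⟨t, ht, h⟩ := (ih _).mp h
        exact ⟨v :: t, (List.prefix_cons_inj v).mpr ht, h⟩
    · rintro ⟨t, ht, h⟩
      cases t with
      | nil => exact Or.inl h
      | cons x t =>
        rw [List.cons_prefix_cons] at ht
        obtain ⟨rfl, ht⟩ := ht
        exact Or.inr ((ih _).mpr ⟨t, ht, h⟩)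

/-- The graph after contracting the first `k` vertices of the order. -/
def lev {n : ℕ} (G : SimpleGraph V) (π : Fin n ≃ V) (k : ℕ) : SimpleGraph V :=
  (((List.finRange n).map ⇑π).take k).foldl chStep G

lemma chGraph_adj_iff {n : ℕ} (G : SimpleGraph V) (π : Fin n ≃ V) (a b : V) :
    (chGraph G π).Adj a b ↔ ∃ k, k ≤ n ∧ (lev G π k).Adj a b := by
  rw [chGraph, chList_adj_iff]
  constructor
  · rintro ⟨t, ht, h⟩
    refine ⟨t.length, ?_, ?_⟩
    · simpa using ht.length_le
    · rw [lev, ← List.prefix_iff_eq_take.mp ht]; exact h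
  · rintro ⟨k, hk, h⟩
    exact ⟨_, List.take_prefix _ _, h⟩

lemma lev_zero {n : ℕ} (G : SimpleGraph V) (π : Fin n ≃ V) : lev G π 0 = G := rfl

lemma lev_succ {n : ℕ} (G : SimpleGraph V) (π : Fin n ≃ V) (k : ℕ) (hk : k < n) :
    lev G π (k + 1) = chStep (lev G π k) (π ⟨k, hk⟩) := by
  rw [lev, lev, List.take_succ, List.foldl_append]
  have : ((List.finRange n).map ⇑π)[k]? = some (π ⟨k, hk⟩) := by
    rw [List.getElem?_eq_getElem (by simpa using hk)]
    simp
  rw [this]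
  rfl
end CH

section CH2
variable {V : Type*} {n : ℕ}

lemma rk_pi {n : ℕ} (π : Fin n ≃ V) (i : Fin n) : rk π (π i) = (i : ℕ) := by
  simp [rk]

lemma rk_lt (π : Fin n ≃ V) (v : V) : rk π v < n := (π.symm v).isLt

lemma rk_inj (π : Fin n ≃ V) {a b : V} (h : rk π a = rk π b) : a = b := by
  have h2 : π.symm a = π.symm b := Fin.val_injective h
  have := congrArg π h2
  simpa using this

/-- Isolated vertices stay isolated under contraction steps. -/
lemma iso_chStep {H : SimpleGraph V} {x : V} (h : ∀ y, ¬ H.Adj x y) (v : V) :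
    ∀ y, ¬ (chStep H v).Adj x y := by
  intro y hy
  obtain ⟨-, -, -, h4⟩ := (chStep_adj _ _ _ _).mp hy
  rcases h4 with h' | ⟨h1, h2⟩
  · exact h y h'
  · exact h v h1.symm

lemma chStep_iso_self (H : SimpleGraph V) (v : V) : ∀ y, ¬ (chStep H v).Adj v y := by
  intro y hy; obtain ⟨-, h2, -, -⟩ := (chStep_adj _ _ _ _).mp hy; exact h2 rfl

lemma lev_iso (G : SimpleGraph V) (π : Fin n ≃ V) {j k : ℕ} (hjk : j < k) (hk : k ≤ n) :
    ∀ y, ¬ (lev G π k).Adj (π ⟨j, lt_of_lt_of_le hjk hk⟩) y := by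
  induction k with
  | zero => omega
  | succ k ih =>
    rw [lev_succ G π k (by omega)]
    rcases Nat.lt_or_ge j k with h | h
    · exact iso_chStep (ih h (by omega)) _
    · have : j = k := by omega
      subst this
      exact chStep_iso_self _ _

lemma lev_rank_le (G : SimpleGraph V) (π : Fin n ≃ V) {k : ℕ} (hk : k ≤ n) {a b : V}
    (h : (lev G π k).Adj a b) : k ≤ rk π a ∧ k ≤ rk π b := by
  constructor
  · by_contra hc
    push_neg at hc
    have : π ⟨rk π a, lt_of_lt_of_le hc hk⟩ = a := by
      simp [rk]
    exact lev_iso G π hc hk b (by rwa [this])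
  · by_contra hc
    push_neg at hc
    have : π ⟨rk π b, lt_of_lt_of_le hc hk⟩ = b := by
      simp [rk]
    exact lev_iso G π hc hk a (by rwa [this, ← SimpleGraph.adj_comm])

lemma lev_persist (G : SimpleGraph V) (π : Fin n ≃ V) {k : ℕ} (hk : k < n) {a b : V}
    (h : (lev G π k).Adj a b) (ha : k < rk π a) (hb : k < rk π b) :
    (lev G π (k + 1)).Adj a b := by
  rw [lev_succ G π k hk]
  refine (chStep_adj _ _ _ _).mpr ⟨h.ne, ?_, ?_, Or.inl h⟩
  · intro e; rw [e, rk_pi] at ha; simp only [Fin.val_mk] at ha; omega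
  · intro e; rw [e, rk_pi] at hb; simp only [Fin.val_mk] at hb; omega

lemma lev_le_of_le (G : SimpleGraph V) (π : Fin n ≃ V) {k m : ℕ} (hkm : k ≤ m) {a b : V}
    (hma : m ≤ rk π a) (hmb : m ≤ rk π b) (h : (lev G π k).Adj a b) :
    (lev G π m).Adj a b := by
  induction m with
  | zero =>
    have : k = 0 := by omega
    subst this; exact h
  | succ m ih =>
    rcases Nat.lt_or_ge k (m+1) with h' | h'
    · have hm : m < n := lt_of_lt_of_le hma (le_of_lt (rk_lt π a))
      exact lev_persist G π hm (ih (by omega) (by omega) (by omega)) (by omega) (by omega)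
    · have : k = m + 1 := by omega
      subst this; exact h

lemma chGraph_adj_lev_min (G : SimpleGraph V) (π : Fin n ≃ V) {a b : V} :
    (chGraph G π).Adj a b ↔ (lev G π (min (rk π a) (rk π b))).Adj a b := by
  constructor
  · intro h
    obtain ⟨k, hk, h⟩ := (chGraph_adj_iff G π a b).mp h
    have h1 := lev_rank_le G π hk h
    exact lev_le_of_le G π (le_min h1.1 h1.2) (min_le_left _ _) (min_le_right _ _) h
  · intro h
    exact (chGraph_adj_iff G π a b).mpr ⟨_, le_of_lt (lt_of_le_of_lt (min_le_left _ _) (rk_lt π a)), h⟩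

lemma le_chGraph (G : SimpleGraph V) (π : Fin n ≃ V) : G ≤ chGraph G π := by
  intro a b h
  exact (chGraph_adj_iff G π a b).mpr ⟨0, Nat.zero_le _, h⟩

/-- The fill property: both edges present at the lower vertex's contraction time
produce a shortcut. -/
lemma chGraph_fill (G : SimpleGraph V) (π : Fin n ≃ V) {a x b : V}
    (hax : (chGraph G π).Adj a x) (hxb : (chGraph G π).Adj x b)
    (h1 : rk π x < rk π a) (h2 : rk π x < rk π b) (hab : a ≠ b) :
    (chGraph G π).Adj a b := by
  have e1 : (lev G π (rk π x)).Adj a x := by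
    have := (chGraph_adj_lev_min G π).mp hax
    rwa [min_eq_right (le_of_lt h1)] at this
  have e2 : (lev G π (rk π x)).Adj x b := by
    have := (chGraph_adj_lev_min G π).mp hxb
    rwa [min_eq_left (le_of_lt h2)] at this
  have hxn : rk π x < n := rk_lt π x
  have hpix : π ⟨rk π x, hxn⟩ = x := by simp [rk]
  have : (lev G π (rk π x + 1)).Adj a b := by
    rw [lev_succ G π _ hxn, hpix]
    refine (chStep_adj _ _ _ _).mpr ⟨hab, fun e => ?_, fun e => ?_, Or.inr ⟨e1.symm, e2⟩⟩
    · rw [e] at h1; omega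
    · rw [e] at h2; omega
  exact (chGraph_adj_iff G π a b).mpr ⟨rk π x + 1, by omega, this⟩

end CH2

set_option linter.deprecated false in
theorem List.chain_singleton {α : Type*} {R : α → α → Prop} {a b : α} :
    List.Chain R a [b] ↔ R a b := by
  show List.IsChain R [a, b] ↔ R a b
  simp

set_option linter.deprecated false in
theorem List.chain_cons' {α : Type*} {R : α → α → Prop} {a b : α} {l : List α} :
    List.Chain R a (b :: l) ↔ R a b ∧ List.Chain R b l := by
  show List.IsChain R (a :: b :: l) ↔ R a b ∧ List.IsChain R (b :: l)
  exact List.isChain_cons_cons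

set_option linter.deprecated false in
theorem List.chain_split {α : Type*} {R : α → α → Prop} {a b : α} {l₁ l₂ : List α} :
    List.Chain R a (l₁ ++ b :: l₂) ↔ List.Chain R a (l₁ ++ [b]) ∧ List.Chain R b l₂ := by
  show List.IsChain R (a :: (l₁ ++ b :: l₂)) ↔
    List.IsChain R (a :: (l₁ ++ [b])) ∧ List.IsChain R (b :: l₂)
  exact List.isChain_cons_split

section Lists
variable {α : Type*} {R : α → α → Prop}

lemma chain_getLastD : ∀ (l : List α) (a b : α), List.Chain R a (l ++ [b]) → R (l.getLastD a) b := by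
  intro l
  induction l with
  | nil => intro a b h; simpa using List.chain_singleton.mp h
  | cons c t ih =>
    intro a b h
    rw [List.cons_append, List.chain_cons'] at h
    rw [List.getLastD_cons]
    exact ih c b h.2

lemma chain_replace_last : ∀ (l : List α) (a x y : α),
    List.Chain R a (l ++ [x]) → R (l.getLastD a) y → List.Chain R a (l ++ [y]) := by
  intro l
  induction l with
  | nil => intro a x y _ h2; simpa using List.chain_singleton.mpr h2
  | cons c t ih =>
    intro a x y h1 h2
    rw [List.cons_append, List.chain_cons'] at h1 ⊢
    rw [List.getLastD_cons] at h2
    exact ⟨h1.1, ih c x y h1.2 h2⟩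

lemma getLastD_mem (l : List α) (a : α) : l.getLastD a ∈ a :: l := by
  induction l generalizing a with
  | nil => simp
  | cons c t ih =>
    rw [List.getLastD_cons]
    rcases List.mem_cons.mp (ih c) with h | h
    · rw [h]; simp
    · right; exact List.mem_cons_of_mem _ h

lemma exists_dup_split : ∀ (l : List α), ¬ l.Nodup → ∃ x l₁ l₂ l₃, l = l₁ ++ x :: l₂ ++ x :: l₃ := by
  intro l
  induction l with
  | nil => intro h; exact absurd List.nodup_nil h
  | cons a t ih =>
    intro h
    by_cases ha : a ∈ t
    · obtain ⟨s, u, rfl⟩ := List.append_of_mem ha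
      exact ⟨a, [], s, u, by simp⟩
    · have : ¬ t.Nodup := fun hn => h (List.nodup_cons.mpr ⟨ha, hn⟩)
      obtain ⟨x, l₁, l₂, l₃, rfl⟩ := ih this
      exact ⟨x, a :: l₁, l₂, l₃, by simp⟩

lemma exists_first (P : α → Prop) : ∀ (l : List α), (∃ x ∈ l, P x) →
    ∃ l₁ y l₂, l = l₁ ++ y :: l₂ ∧ P y ∧ ∀ z ∈ l₁, ¬ P z := by
  intro l
  induction l with
  | nil => rintro ⟨x, hx, -⟩; exact absurd hx List.not_mem_nil
  | cons a t ih =>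
    intro h
    by_cases hPa : P a
    · exact ⟨[], a, t, by simp, hPa, by simp⟩
    · obtain ⟨x, hx, hPx⟩ := h
      have hxt : x ∈ t := by
        rcases List.mem_cons.mp hx with rfl | h'
        · exact absurd hPx hPa
        · exact h'
      obtain ⟨l₁, y, l₂, rfl, hPy, hl₁⟩ := ih ⟨x, hxt, hPx⟩
      refine ⟨a :: l₁, y, l₂, by simp, hPy, ?_⟩
      intro z hz
      rcases List.mem_cons.mp hz with rfl | h'
      · exact hPa
      · exact hl₁ z h'

lemma chain_dedup : ∀ (m : ℕ) (l : List α) (u w : α), l.length ≤ m → u ≠ w →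
    List.Chain R u (l ++ [w]) →
    ∃ l', (∀ x ∈ l', x ∈ l) ∧ l'.Nodup ∧ u ∉ l' ∧ w ∉ l' ∧ List.Chain R u (l' ++ [w]) := by
  intro m
  induction m with
  | zero =>
    intro l u w hl huw hc
    rw [List.length_eq_zero_iff.mp (Nat.le_zero.mp hl)] at hc ⊢
    exact ⟨[], by simp, List.nodup_nil, by simp, by simp, hc⟩
  | succ m ih =>
    intro l u w hl huw hc
    by_cases hu : u ∈ l
    · obtain ⟨l₁, l₂, rfl⟩ := List.append_of_mem hu
      rw [List.append_assoc, List.cons_append, List.chain_split] at hc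
      obtain ⟨l', h1, h2, h3, h4, h5⟩ := ih l₂ u w (by simp at hl ⊢; omega) huw hc.2
      exact ⟨l', fun x hx => by simp [h1 x hx], h2, h3, h4, h5⟩
    · by_cases hw : w ∈ l
      · obtain ⟨l₁, l₂, rfl⟩ := List.append_of_mem hw
        rw [List.append_assoc, List.cons_append, List.chain_split] at hc
        obtain ⟨l', h1, h2, h3, h4, h5⟩ := ih l₁ u w (by simp at hl ⊢; omega) huw hc.1
        exact ⟨l', fun x hx => by simp [h1 x hx], h2, h3, h4, h5⟩
      · by_cases hn : l.Nodup
        · exact ⟨l, fun x hx => hx, hn, hu, hw, hc⟩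
        · obtain ⟨x, l₁, l₂, l₃, rfl⟩ := exists_dup_split l hn
          have hc1 : List.Chain R u ((l₁ ++ [x]) ++ (l₂ ++ x :: l₃ ++ [w])) := by
            simpa [List.append_assoc] using hc
          rw [List.append_assoc l₁ [x], List.singleton_append, List.chain_split] at hc1
          have hc2 : List.Chain R x ((l₂ ++ [x]) ++ (l₃ ++ [w])) := by
            simpa [List.append_assoc] using hc1.2
          rw [List.append_assoc l₂ [x], List.singleton_append, List.chain_split] at hc2
          have hc3 : List.Chain R u ((l₁ ++ x :: l₃) ++ [w]) := by
            rw [List.append_assoc, List.cons_append, List.chain_split]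
            exact ⟨hc1.1, hc2.2⟩
          obtain ⟨l', h1, h2, h3, h4, h5⟩ := ih (l₁ ++ x :: l₃) u w (by simp at hl ⊢; omega) huw hc3
          refine ⟨l', fun z hz => ?_, h2, h3, h4, h5⟩
          have := h1 z hz
          simp at this ⊢
          tauto

end Lists

section Splice
variable {V : Type*} {n : ℕ}

lemma chain_splice (G : SimpleGraph V) (π : Fin n ≃ V) :
    ∀ (m : ℕ) (l : List V) (u w : V), l.length ≤ m → u ≠ w → l.Nodup → u ∉ l → w ∉ l →
    (∀ x ∈ l, rk π x < rk π u ∧ rk π x < rk π w) →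
    List.Chain (chGraph G π).Adj u (l ++ [w]) → (chGraph G π).Adj u w := by
  classical
  intro m
  induction m with
  | zero =>
    intro l u w hl _ _ _ _ _ hc
    rw [List.length_eq_zero_iff.mp (Nat.le_zero.mp hl)] at hc
    exact List.chain_singleton.mp hc
  | succ m ih =>
    intro l u w hl huw hnd hu hw hrk hc
    cases l with
    | nil => exact List.chain_singleton.mp hc
    | cons a t =>
      -- pick the minimum-rank element x of the list
      have hne : (a :: t).toFinset.Nonempty := ⟨a, by simp⟩
      obtain ⟨x, hxmem, hxmin⟩ := Finset.exists_min_image (a :: t).toFinset (rk π) hne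
      rw [List.mem_toFinset] at hxmem
      have hxmin' : ∀ y ∈ (a :: t), rk π x ≤ rk π y := fun y hy =>
        hxmin y (List.mem_toFinset.mpr hy)
      obtain ⟨l₁, l₂, hsplit⟩ := List.append_of_mem hxmem
      rw [hsplit] at hc hnd hu hw hrk hl hxmin'
      rw [List.append_assoc, List.cons_append, List.chain_split] at hc
      rw [List.nodup_append] at hnd
      obtain ⟨hnd1, hnd2, hdisj⟩ := hnd
      have hxl₁ : x ∉ l₁ := fun h => hdisj x h x List.mem_cons_self rfl
      have hrk1 : ∀ z ∈ l₁, rk π x < rk π z := by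
        intro z hz
        have hle := hxmin' z (by simp [hz])
        have hne : x ≠ z := fun e => hxl₁ (e ▸ hz)
        exact lt_of_le_of_ne hle (fun e => hne (rk_inj π e))
      set aL := l₁.getLastD u with haL
      have hax : (chGraph G π).Adj aL x := chain_getLastD l₁ u x hc.1
      have hrkax : rk π x < rk π aL := by
        rcases List.mem_cons.mp (getLastD_mem l₁ u) with h | h
        · rw [haL, h]; exact (hrk x (by simp)).1
        · exact hrk1 _ h
      cases l₂ with
      | nil =>
        have hxw : (chGraph G π).Adj x w := by
          simpa using List.chain_singleton.mp hc.2
        have haw : aL ≠ w := by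
          rcases List.mem_cons.mp (getLastD_mem l₁ u) with h | h
          · rw [haL, h]; exact huw
          · intro e; exact hw (by rw [← e, haL]; exact List.mem_append_left _ h)
        have hadj : (chGraph G π).Adj aL w :=
          chGraph_fill G π hax hxw hrkax (hrk x (by simp)).2 haw
        have hc' : List.Chain (chGraph G π).Adj u (l₁ ++ [w]) :=
          chain_replace_last l₁ u x w hc.1 hadj
        refine ih l₁ u w ?_ huw hnd1 ?_ ?_ ?_ hc'
        · simp at hl ⊢; omega
        · intro h; exact hu (by simp [h])
        · intro h; exact hw (by simp [h])
        · intro z hz; exact hrk z (by simp [hz])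
      | cons c t₂ =>
        rw [List.cons_append, List.chain_cons'] at hc
        have hxc : (chGraph G π).Adj x c := hc.2.1
        have hrkxc : rk π x < rk π c := by
          have hle := hxmin' c (by simp)
          have hne : x ≠ c := by
            intro e
            have : x ∉ (c :: t₂) := fun h => (List.nodup_cons.mp hnd2).1 h
            exact this (by rw [e]; simp)
          exact lt_of_le_of_ne hle (fun e => hne (rk_inj π e))
        have hac : aL ≠ c := by
          rcases List.mem_cons.mp (getLastD_mem l₁ u) with h | h
          · rw [haL, h]; intro e; exact hu (by simp [e])
          · intro e; exact hdisj _ h _ (by rw [← haL, e]; simp) rfl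
        have hadj : (chGraph G π).Adj aL c := chGraph_fill G π hax hxc hrkax hrkxc hac
        have hc1 : List.Chain (chGraph G π).Adj u (l₁ ++ [c]) :=
          chain_replace_last l₁ u x c hc.1 hadj
        have hc' : List.Chain (chGraph G π).Adj u ((l₁ ++ c :: t₂) ++ [w]) := by
          rw [List.append_assoc, List.cons_append, List.chain_split]
          exact ⟨hc1, hc.2.2⟩
        refine ih (l₁ ++ c :: t₂) u w ?_ huw ?_ ?_ ?_ ?_ hc'
        · simp at hl ⊢; omega
        · rw [List.nodup_append]
          refine ⟨hnd1, (List.nodup_cons.mp hnd2).2, ?_⟩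
          intro z hz b hb
          exact hdisj z hz b (by simp [hb])
        · intro h; rcases List.mem_append.mp h with h | h
          · exact hu (by simp [h])
          · exact hu (by simp [h])
        · intro h; rcases List.mem_append.mp h with h | h
          · exact hw (by simp [h])
          · exact hw (by simp [h])
        · intro z hz; rcases List.mem_append.mp hz with h | h
          · exact hrk z (by simp [h])
          · exact hrk z (by simp [h])

lemma reach_up (G : SimpleGraph V) (π : Fin n ≃ V) (v : V) :
    ∀ (m : ℕ) (w : V) (l : List V), rk π v ≤ rk π w + m →
    List.Chain (chGraph G π).Adj w (l ++ [v]) →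
    (∀ x ∈ l, rk π x ≤ rk π v) → rk π w ≤ rk π v → UpReach G π w v := by
  intro m
  induction m with
  | zero =>
    intro w l hm _ _ hle
    have : w = v := rk_inj π (by omega)
    rw [this]
    exact Relation.ReflTransGen.refl
  | succ m ih =>
    intro w l hm hc hlv hle
    by_cases hwv : w = v
    · rw [hwv]; exact Relation.ReflTransGen.refl
    · have hlt : rk π w < rk π v :=
        lt_of_le_of_ne hle (fun e => hwv (rk_inj π e))
      obtain ⟨l', hsub, hnd, hwl', hvl', hc'⟩ := chain_dedup l.length l w v le_rfl hwv hc
      have hlv' : ∀ x ∈ l', rk π x ≤ rk π v := fun x hx => hlv x (hsub x hx)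
      -- find the first element of l' ++ [v] with rank above rk w
      have hex : ∃ y ∈ l' ++ [v], rk π w < rk π y := ⟨v, by simp, hlt⟩
      obtain ⟨p, y, q, heq, hPy, hp⟩ := exists_first _ _ hex
      have hpsub : ∀ z ∈ p, z ∈ l' := by
        intro z hz
        have : z ∈ l' ++ [v] := by rw [heq]; simp [hz]
        rcases List.mem_append.mp this with h | h
        · exact h
        · exfalso; exact hp z hz (by simp at h; rw [h]; exact hlt)
      have hplen : p.length ≤ l'.length := by
        have := congrArg List.length heq
        simp at this; omega
      have hpnd : p.Nodup := by
        have h1 : (l' ++ [v]).take p.length = p := by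
          rw [heq]; exact List.take_left
        have h2 : (l' ++ [v]).take p.length = l'.take p.length :=
          List.take_append_of_le_length hplen
        have h4 : p.Sublist l' := by
          rw [h1.symm.trans h2]
          exact List.take_sublist _ _
        exact h4.nodup hnd
      rw [heq, List.chain_split] at hc'
      have hrkp : ∀ z ∈ p, rk π z < rk π w ∧ rk π z < rk π y := by
        intro z hz
        have h1 : ¬ rk π w < rk π z := hp z hz
        have h2 : z ≠ w := fun e => hwl' (e ▸ hpsub z hz)
        have h3 : rk π z < rk π w :=
          lt_of_le_of_ne (by omega) (fun e => h2 (rk_inj π e))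
        exact ⟨h3, lt_trans h3 hPy⟩
      have hwy : w ≠ y := fun e => by rw [← e] at hPy; omega
      have hyp : y ∉ p := fun h => by have := (hrkp y h).2; omega
      have hwp : w ∉ p := fun h => hwl' (hpsub w h)
      have hadj : (chGraph G π).Adj w y :=
        chain_splice G π p.length p w y le_rfl hwy hpnd hwp hyp hrkp hc'.1
      have hstep : (chGraph G π).Adj w y ∧ rk π w < rk π y := ⟨hadj, hPy⟩
      by_cases hyv : y = v
      · rw [← hyv]
        exact Relation.ReflTransGen.single hstep
      · -- q ends with v, and l' = p ++ y :: q.dropLast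
        have hyl' : y ∈ l' := by
          have : y ∈ l' ++ [v] := by rw [heq]; simp
          rcases List.mem_append.mp this with h | h
          · exact h
          · simp at h; exact absurd h hyv
        have hq : q ≠ [] := by
          intro h
          rw [h] at heq
          have := (List.append_inj' heq (by simp)).2
          simp at this; exact hyv this.symm
        have heq2 : l' ++ [v] = (p ++ y :: q.dropLast) ++ [q.getLast hq] := by
          rw [heq]
          simp only [List.append_assoc, List.cons_append, List.dropLast_append_getLast hq]
        obtain ⟨hl'eq, hlast⟩ := List.append_inj' heq2 (by simp)
        have hlastv : q.getLast hq = v := by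
          have := hlast.symm
          simp at this; exact this
        have hq2 : q.dropLast ++ [v] = q := by
          have h5a := heq
          rw [hl'eq] at h5a
          simpa [List.append_assoc] using h5a
        have hcq : List.Chain (chGraph G π).Adj y (q.dropLast ++ [v]) := by
          rw [hq2]; exact hc'.2
        have hrest : UpReach G π y v := by
          refine ih y q.dropLast (by omega) hcq ?_ (hlv' y hyl')
          intro z hz
          exact hlv' z (by rw [hl'eq]; simp [hz])
        exact Relation.ReflTransGen.head hstep hrest

end Splice

section Comp
variable {V : Type*} [Fintype V] [DecidableEq V]

/-- Reachability inside a vertex set `W`. -/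
def ReachIn (G : SimpleGraph V) (W : Finset V) (u x : V) : Prop :=
  Relation.ReflTransGen (fun a b => G.Adj a b ∧ a ∈ W ∧ b ∈ W) u x

/-- The connected component of `u` in the subgraph induced by `W`. -/
noncomputable def compF (G : SimpleGraph V) (W : Finset V) (u : V) : Finset V :=
  @Finset.filter _ (fun x => ReachIn G W u x) (Classical.decPred _) Finset.univ

lemma mem_compF {G : SimpleGraph V} {W : Finset V} {u x : V} :
    x ∈ compF G W u ↔ ReachIn G W u x := by
  simp [compF, Finset.mem_filter]

lemma reachIn_symm {G : SimpleGraph V} {W : Finset V} {u x : V}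
    (h : ReachIn G W u x) : ReachIn G W x u := by
  haveI : Std.Symm (fun a b : V => G.Adj a b ∧ a ∈ W ∧ b ∈ W) :=
    ⟨by rintro a b ⟨h1, h2, h3⟩; exact ⟨h1.symm, h3, h2⟩⟩
  exact Std.Symm.symm (r := Relation.ReflTransGen (fun a b : V => G.Adj a b ∧ a ∈ W ∧ b ∈ W)) _ _ h

lemma self_mem_compF {G : SimpleGraph V} {W : Finset V} {u : V} :
    u ∈ compF G W u := mem_compF.mpr Relation.ReflTransGen.refl

lemma compF_subset {G : SimpleGraph V} {W : Finset V} {u : V} (hu : u ∈ W) :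
    compF G W u ⊆ W := by
  intro x hx
  have h := mem_compF.mp hx
  induction h with
  | refl => exact hu
  | tail _ h2 _ => exact h2.2.2

lemma compF_adj_closed {G : SimpleGraph V} {W : Finset V} {u x y : V} (hu : u ∈ W)
    (hx : x ∈ compF G W u) (hadj : G.Adj x y) (hy : y ∈ W) : y ∈ compF G W u :=
  mem_compF.mpr (Relation.ReflTransGen.tail (mem_compF.mp hx)
    ⟨hadj, compF_subset hu hx, hy⟩)

lemma compF_eq_of_mem {G : SimpleGraph V} {W : Finset V} {u x : V}
    (hx : x ∈ compF G W u) : compF G W x = compF G W u := by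
  ext z
  rw [mem_compF, mem_compF]
  constructor
  · intro h; exact Relation.ReflTransGen.trans (mem_compF.mp hx) h
  · intro h; exact Relation.ReflTransGen.trans (reachIn_symm (mem_compF.mp hx)) h

lemma compF_mono {G : SimpleGraph V} {W W' : Finset V} {u : V} (h : W' ⊆ W) :
    compF G W' u ⊆ compF G W u := by
  intro x hx
  rw [mem_compF] at hx ⊢
  exact Relation.ReflTransGen.mono (p := fun a b => G.Adj a b ∧ a ∈ W ∧ b ∈ W)
    (fun a b hab => ⟨hab.1, h hab.2.1, h hab.2.2⟩) _ _ hx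

lemma compF_restrict {G : SimpleGraph V} {W W' : Finset V} {u : V}
    (h : ∀ z ∈ compF G W u, z ∈ W') : compF G W u ⊆ compF G W' u := by
  intro x hx
  rw [mem_compF] at hx ⊢
  have : ∀ y, ReachIn G W u y → ReachIn G W' u y := by
    intro y hy
    induction hy with
    | refl => exact Relation.ReflTransGen.refl
    | @tail a b hab hstep ih =>
      refine Relation.ReflTransGen.tail ih ⟨hstep.1, ?_, ?_⟩
      · exact h a (mem_compF.mpr hab)
      · exact h b (mem_compF.mpr (Relation.ReflTransGen.tail hab hstep))
  exact this x hx

lemma reachIn_univ_of_connected {G : SimpleGraph V} (hG : G.Connected) (u x : V) :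
    ReachIn G Finset.univ u x := by
  obtain ⟨p⟩ := hG.preconnected u x
  induction p with
  | nil => exact Relation.ReflTransGen.refl
  | cons h _ ih =>
    exact Relation.ReflTransGen.head ⟨h, Finset.mem_univ _, Finset.mem_univ _⟩ ih

lemma reachIn_chain {G : SimpleGraph V} {W : Finset V} {u x : V}
    (h : ReachIn G W u x) :
    u = x ∨ ∃ l, (∀ z ∈ l, z ∈ compF G W u) ∧ List.Chain G.Adj u (l ++ [x]) := by
  induction h with
  | refl => exact Or.inl rfl
  | @tail a b hab hstep ih =>
    right
    rcases ih with rfl | ⟨l, hl, hc⟩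
    · exact ⟨[], by simp, List.chain_singleton.mpr hstep.1⟩
    · refine ⟨l ++ [a], ?_, ?_⟩
      · intro z hz
        rcases List.mem_append.mp hz with h | h
        · exact hl z h
        · simp at h; rw [h]; exact mem_compF.mpr hab
      · rw [List.append_assoc, List.singleton_append, List.chain_split]
        exact ⟨hc, List.chain_singleton.mpr hstep.1⟩

end Comp

set_option linter.unusedSectionVars false

section Part
variable {V : Type*} [Fintype V] [DecidableEq V]

lemma part_aux (G : SimpleGraph V) (n : ℕ) (W : Finset V) (hWn : W.card ≤ n) :
    ∀ (m : ℕ) (U A B : Finset V), U.card ≤ m →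
    A ∪ B ∪ U = W → Disjoint A B → Disjoint A U → Disjoint B U →
    (∀ u ∈ U, compF G W u ⊆ U) →
    (∀ u ∈ U, 3 * (compF G W u).card ≤ 2 * n) →
    (∀ u ∈ U, (compF G W u).card ≤ A.card ∨ A = ∅) →
    (∀ u ∈ U, (compF G W u).card ≤ B.card ∨ B = ∅) →
    (∀ a ∈ A, ∀ b ∈ B, ¬ G.Adj a b) →
    3 * A.card ≤ 2 * n → 3 * B.card ≤ 2 * n →
    ∃ A' B' : Finset V, A' ∪ B' = W ∧ Disjoint A' B' ∧
      (∀ a ∈ A', ∀ b ∈ B', ¬ G.Adj a b) ∧ 3 * A'.card ≤ 2 * n ∧ 3 * B'.card ≤ 2 * n := by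
  intro m
  induction m with
  | zero =>
    intro U A B hUm hW hAB _ _ _ _ _ _ hnoadj h3A h3B
    have : U = ∅ := Finset.card_eq_zero.mp (Nat.le_zero.mp hUm)
    rw [this, Finset.union_empty] at hW
    exact ⟨A, B, hW, hAB, hnoadj, h3A, h3B⟩
  | succ m ih =>
    intro U A B hUm hW hAB hAU hBU hclosed hsize hA hB hnoadj h3A h3B
    rcases Finset.eq_empty_or_nonempty U with rfl | hUne
    · rw [Finset.union_empty] at hW
      exact ⟨A, B, hW, hAB, hnoadj, h3A, h3B⟩
    obtain ⟨u₀, hu₀, hmax⟩ := Finset.exists_max_image U (fun u => (compF G W u).card) hUne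
    have hUW : U ⊆ W := by
      rw [← hW]; intro x hx; simp [hx]
    have hAW : A ⊆ W := by
      rw [← hW]; intro x hx; simp [hx]
    have hBW : B ⊆ W := by
      rw [← hW]; intro x hx; simp [hx]
    set P := compF G W u₀ with hP
    have hPU : P ⊆ U := hclosed u₀ hu₀
    have hu₀P : u₀ ∈ P := self_mem_compF
    have hUm' : (U \ P).card ≤ m := by
      have hsub : U \ P ⊆ U.erase u₀ := by
        intro x hx
        rw [Finset.mem_sdiff] at hx
        exact Finset.mem_erase.mpr ⟨fun e => hx.2 (e ▸ hu₀P), hx.1⟩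
      have h1 := Finset.card_le_card hsub
      rw [Finset.card_erase_of_mem hu₀] at h1
      have := Finset.card_pos.mpr hUne
      omega
    -- cardinalities
    have hWcard : A.card + B.card + U.card = W.card := by
      rw [← hW, Finset.card_union_of_disjoint, Finset.card_union_of_disjoint hAB]
      rw [Finset.disjoint_union_left]
      exact ⟨hAU, hBU⟩
    have hPcard : P.card ≤ U.card := Finset.card_le_card hPU
    have hsizeP : 3 * P.card ≤ 2 * n := hsize u₀ hu₀
    -- new closedness (shared)
    have hclosed' : ∀ u ∈ U \ P, compF G W u ⊆ U \ P := by
      intro u hu z hz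
      rw [Finset.mem_sdiff] at hu
      refine Finset.mem_sdiff.mpr ⟨hclosed u hu.1 hz, fun hzP => ?_⟩
      have h1 : compF G W z = compF G W u := compF_eq_of_mem hz
      have h2 : compF G W z = P := compF_eq_of_mem hzP
      exact hu.2 (h2 ▸ h1 ▸ (self_mem_compF : u ∈ compF G W u))
    have hPadj : ∀ a ∈ P, ∀ b ∈ W, G.Adj a b → b ∈ P := by
      intro a ha b hb hadj
      exact compF_adj_closed (hUW hu₀) ha hadj hb
    rcases le_or_gt A.card B.card with hord | hord
    · -- add P to A
      have hdisjAP : Disjoint A P := hAU.mono_right hPU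
      have hcard' : (A ∪ P).card = A.card + P.card := Finset.card_union_of_disjoint hdisjAP
      have hsizeP' : 3 * P.card ≤ 2 * n := hsizeP
      have h3A' : 3 * (A ∪ P).card ≤ 2 * n := by
        rw [hcard']
        rcases hA u₀ hu₀ with h | h
        · have h' : P.card ≤ A.card := h
          omega
        · rw [h]
          simpa using hsizeP'
      refine ih (U \ P) (A ∪ P) B hUm' ?_ ?_ ?_ ?_ hclosed'
        (fun u hu => hsize u (Finset.mem_sdiff.mp hu).1) ?_ ?_ ?_ h3A' h3B
      · rw [← hW]
        ext x
        have hxPU : x ∈ P → x ∈ U := fun hx => hPU hx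
        simp only [Finset.mem_union, Finset.mem_sdiff]
        constructor <;> (intro hx; by_cases hxP : x ∈ P <;> tauto)
      · rw [Finset.disjoint_union_left]
        exact ⟨hAB, (hBU.mono_right hPU).symm⟩
      · rw [Finset.disjoint_union_left]
        exact ⟨hAU.mono_right Finset.sdiff_subset, Finset.disjoint_sdiff⟩
      · exact hBU.mono_right Finset.sdiff_subset
      · intro u hu
        left
        have h1 : (compF G W u).card ≤ P.card := hmax u (Finset.mem_sdiff.mp hu).1
        omega
      · intro u hu
        rcases hB u (Finset.mem_sdiff.mp hu).1 with h | h
        · exact Or.inl h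
        · exact Or.inr h
      · intro a ha b hb
        rcases Finset.mem_union.mp ha with h | h
        · exact hnoadj a h b hb
        · intro hadj
          have : b ∈ P := hPadj a h b (hBW hb) hadj
          exact (Finset.disjoint_left.mp hBU hb) (hPU this)
    · -- add P to B
      have hdisjBP : Disjoint B P := hBU.mono_right hPU
      have hcard' : (B ∪ P).card = B.card + P.card := Finset.card_union_of_disjoint hdisjBP
      have hsizeP' : 3 * P.card ≤ 2 * n := hsizeP
      have h3B' : 3 * (B ∪ P).card ≤ 2 * n := by
        rw [hcard']
        rcases hB u₀ hu₀ with h | h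
        · have h' : P.card ≤ B.card := h
          omega
        · rw [h]
          simpa using hsizeP'
      refine ih (U \ P) A (B ∪ P) hUm' ?_ ?_ ?_ ?_ hclosed'
        (fun u hu => hsize u (Finset.mem_sdiff.mp hu).1) ?_ ?_ ?_ h3A h3B'
      · rw [← hW]
        ext x
        have hxPU : x ∈ P → x ∈ U := fun hx => hPU hx
        simp only [Finset.mem_union, Finset.mem_sdiff]
        constructor <;> (intro hx; by_cases hxP : x ∈ P <;> tauto)
      · rw [Finset.disjoint_union_right]
        exact ⟨hAB, hAU.mono_right hPU⟩
      · exact hAU.mono_right Finset.sdiff_subset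
      · rw [Finset.disjoint_union_left]
        exact ⟨hBU.mono_right Finset.sdiff_subset, Finset.disjoint_sdiff⟩
      · intro u hu
        rcases hA u (Finset.mem_sdiff.mp hu).1 with h | h
        · exact Or.inl h
        · exact Or.inr h
      · intro u hu
        left
        have h1 : (compF G W u).card ≤ P.card := hmax u (Finset.mem_sdiff.mp hu).1
        omega
      · intro a ha b hb
        rcases Finset.mem_union.mp hb with h | h
        · exact hnoadj a ha b h
        · intro hadj
          have : a ∈ P := hPadj b h a (hAW ha) hadj.symm
          exact (Finset.disjoint_left.mp hAU ha) (hPU this)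

lemma part (G : SimpleGraph V) (n : ℕ) (W : Finset V) (hWn : W.card ≤ n)
    (hcomp : ∀ u ∈ W, 3 * (compF G W u).card ≤ 2 * n) :
    ∃ A B : Finset V, A ∪ B = W ∧ Disjoint A B ∧
      (∀ a ∈ A, ∀ b ∈ B, ¬ G.Adj a b) ∧ 3 * A.card ≤ 2 * n ∧ 3 * B.card ≤ 2 * n := by
  refine part_aux G n W hWn W.card W ∅ ∅ le_rfl (by simp) (by simp) (by simp) (by simp)
    (fun u hu => compF_subset hu) hcomp (fun u _ => Or.inr rfl) (fun u _ => Or.inr rfl)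
    (by simp) (by simp) (by simp)

end Part

/-- Let `s` be the cardinality of a minimum balanced separator of the
connected graph `G`. Then for every contraction order `π`:
(i) some vertex `v` has at least `s` vertices and at least `s * (s - 1) / 2` arcs in
its search space `SS v`, and
(ii) the average over all `n` vertices of the number of vertices of `SS v` is at
least `s / 3`, and the average number of arcs of `SS v` is at least `s * (s - 1) / 6`
(both stated multiplied out to avoid division). -/
theorem stmt5 {V : Type*} [Fintype V] [DecidableEq V] {n : ℕ}
    (G : SimpleGraph V) (hG : G.Connected) (π : Fin n ≃ V)
    (S : Finset V) (hS : IsBalancedSepOn G Finset.univ S)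
    (hmin : ∀ S' : Finset V, IsBalancedSepOn G Finset.univ S' → S.card ≤ S'.card) :
    (∃ v : V, S.card ≤ nVertsSS G π v ∧ S.card * (S.card - 1) ≤ 2 * nArcsSS G π v) ∧
    n * S.card ≤ 3 * ∑ v : V, nVertsSS G π v ∧
    n * (S.card * (S.card - 1)) ≤ 6 * ∑ v : V, nArcsSS G π v := by
  classical
  have hne : Nonempty V := hG.nonempty
  have hcard : Fintype.card V = n := by
    rw [← Fintype.card_fin n]
    exact (Fintype.card_congr π).symm
  have hn1 : 1 ≤ n := by
    rw [← hcard]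
    exact Fintype.card_pos
  set low : ℕ → Finset V := fun k => Finset.univ.filter (fun x => rk π x ≤ k) with hlow
  have hlowmem : ∀ k x, x ∈ low k ↔ rk π x ≤ k := by
    intro k x; simp [hlow]
  -- there is a level with a large component
  have hbig_ex : ∃ k, ∃ u, rk π u ≤ k ∧ 2 * n < 3 * (compF G (low k) u).card := by
    obtain ⟨u⟩ := hne
    refine ⟨n - 1, u, by have := rk_lt π u; omega, ?_⟩
    have hlu : low (n - 1) = Finset.univ := by
      ext x; rw [hlowmem]; simp; have := rk_lt π x; omega
    have hcu : compF G (low (n-1)) u = Finset.univ := by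
      apply Finset.eq_univ_of_forall
      intro x
      rw [mem_compF, hlu]
      exact reachIn_univ_of_connected hG u x
    rw [hcu, Finset.card_univ, hcard]
    omega
  set k₀ := Nat.find hbig_ex with hk₀
  obtain ⟨u₀, hu₀rk, hu₀big⟩ := Nat.find_spec hbig_ex
  have hmink : ∀ k, k < k₀ → ∀ u, rk π u ≤ k → 3 * (compF G (low k) u).card ≤ 2 * n := by
    intro k hk u hu
    have := Nat.find_min hbig_ex hk
    push_neg at this
    exact this u hu
  set C := compF G (low k₀) u₀ with hC
  have hu₀low : u₀ ∈ low k₀ := (hlowmem _ _).mpr hu₀rk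
  have hu₀C : u₀ ∈ C := self_mem_compF
  have hClow : C ⊆ low k₀ := compF_subset hu₀low
  have hCbig : 2 * n < 3 * C.card := hu₀big
  -- the top vertex of C
  obtain ⟨v, hvC, hvmax⟩ := Finset.exists_max_image C (rk π) ⟨u₀, hu₀C⟩
  have hrkv : rk π v ≤ k₀ := (hlowmem _ _).mp (hClow hvC)
  have hCv : ∀ z ∈ C, z ≠ v → rk π z < rk π v := by
    intro z hz hzv
    exact lt_of_le_of_ne (hvmax z hz) (fun e => hzv (rk_inj π e))
  -- everything in C reaches v upward
  have hmemCeq : ∀ w ∈ C, compF G (low k₀) w = C := fun w hw => compF_eq_of_mem hw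
  have hreach : ∀ w ∈ C, UpReach G π w v := by
    intro w hw
    have hRv : ReachIn G (low k₀) w v := by
      rw [← mem_compF, hmemCeq w hw]; exact hvC
    rcases reachIn_chain hRv with rfl | ⟨l, hl, hc⟩
    · exact Relation.ReflTransGen.refl
    · have hc' : List.Chain (chGraph G π).Adj w (l ++ [v]) :=
        List.Chain.imp (fun a b hab => le_chGraph G π hab) hc
      refine reach_up G π v (rk π v) w l (by omega) hc' ?_ (hvmax w hw)
      intro x hx
      have hxC : x ∈ C := by rw [← hmemCeq w hw]; exact hl x hx
      exact hvmax x hxC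
  -- upward neighbourhood of v
  set nbr : Finset V := Finset.univ.filter
    (fun h => (chGraph G π).Adj v h ∧ rk π v < rk π h) with hnbr
  have hnbrmem : ∀ h, h ∈ nbr ↔ (chGraph G π).Adj v h ∧ rk π v < rk π h := by
    intro h; simp [hnbr]
  set S' : Finset V := insert v nbr with hS'
  -- every G-edge from C \ {v} to a vertex above v lands in nbr
  have hhigh : ∀ x ∈ C, x ≠ v → ∀ h, G.Adj x h → rk π v < rk π h → h ∈ nbr := by
    intro x hxC hxv h hadj hrkh
    have hRv : ReachIn G (low k₀) x v := by
      rw [← mem_compF, hmemCeq x hxC]; exact hvC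
    have hhv : h ≠ v := by
      intro e; rw [e] at hrkh; omega
    have hchain : ∃ l0 : List V, (∀ z ∈ l0, z ∈ C) ∧
        List.Chain (chGraph G π).Adj h (l0 ++ [v]) := by
      rcases reachIn_chain hRv with rfl | ⟨l, hl, hc⟩
      · exact absurd rfl hxv
      · refine ⟨x :: l, ?_, ?_⟩
        · intro z hz
          rcases List.mem_cons.mp hz with rfl | hzl
          · exact hxC
          · rw [← hmemCeq x hxC]; exact hl z hzl
        · rw [List.cons_append, List.chain_cons']
          exact ⟨(le_chGraph G π) hadj.symm,
            List.Chain.imp (fun a b hab => le_chGraph G π hab) hc⟩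
    obtain ⟨l0, hl0C, hc2⟩ := hchain
    obtain ⟨l', hsub, hnd, hhl', hvl', hc3⟩ := chain_dedup l0.length l0 h v le_rfl hhv hc2
    have hadj2 : (chGraph G π).Adj h v := by
      refine chain_splice G π l'.length l' h v le_rfl hhv hnd hhl' hvl' ?_ hc3
      intro z hz
      have hzC : z ∈ C := hl0C z (hsub z hz)
      have hzv : z ≠ v := fun e => hvl' (e ▸ hz)
      have h1 : rk π z < rk π v := hCv z hzC hzv
      exact ⟨lt_trans h1 hrkh, h1⟩
    exact (hnbrmem h).mpr ⟨hadj2.symm, hrkh⟩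
  -- components of the graph with S' removed, inside C, stay inside C \ {v}
  set W : Finset V := Finset.univ \ S' with hW
  have hWmem : ∀ x, x ∈ W ↔ x ∉ S' := by intro x; simp [hW]
  have hvS' : v ∈ S' := Finset.mem_insert_self _ _
  have hclaim2 : ∀ z, z ∈ C → z ≠ v → ∀ x, ReachIn G W z x → x ∈ C.erase v := by
    intro z hz hzv x hR
    induction hR with
    | refl => exact Finset.mem_erase.mpr ⟨hzv, hz⟩
    | @tail a b hab hstep ih =>
      have haC : a ∈ C.erase v := ih
      obtain ⟨hadj, haW, hbW⟩ := hstep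
      have hbv : b ≠ v := fun e => ((hWmem b).mp hbW) (e ▸ hvS')
      rcases le_or_gt (rk π b) k₀ with hbk | hbk
      · refine Finset.mem_erase.mpr ⟨hbv, ?_⟩
        exact compF_adj_closed hu₀low (Finset.mem_erase.mp haC).2 hadj ((hlowmem _ _).mpr hbk)
      · exfalso
        have : b ∈ nbr := hhigh a (Finset.mem_erase.mp haC).2 (Finset.mem_erase.mp haC).1
          b hadj (by omega)
        exact ((hWmem b).mp hbW) (Finset.mem_insert_of_mem this)
  -- all components of G - S' are small
  have hcompbound : ∀ u ∈ W, 3 * (compF G W u).card ≤ 2 * n := by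
    intro u huW
    by_cases huC : u ∈ C
    · have huv : u ≠ v := fun e => ((hWmem u).mp huW) (e ▸ hvS')
      have hsub1 : ∀ x ∈ compF G W u, x ∈ C.erase v := by
        intro x hx
        exact hclaim2 u huC huv x (mem_compF.mp hx)
      have hurkv : rk π u < rk π v := hCv u huC huv
      have hsubl : ∀ x ∈ compF G W u, x ∈ low (k₀ - 1) := by
        intro x hx
        have h1 := hsub1 x hx
        rw [Finset.mem_erase] at h1
        have h2 : rk π x < rk π v := hCv x h1.2 h1.1
        rw [hlowmem]
        omega
      have hsub2 : compF G W u ⊆ compF G (low (k₀ - 1)) u := compF_restrict hsubl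
      have hk0pos : 1 ≤ k₀ := by omega
      have hnotbig := hmink (k₀ - 1) (by omega) u (by omega)
      calc 3 * (compF G W u).card ≤ 3 * (compF G (low (k₀ - 1)) u).card := by
            have := Finset.card_le_card hsub2; omega
        _ ≤ 2 * n := hnotbig
    · have hdis : ∀ x ∈ compF G W u, x ∉ C := by
        intro x hx hxC
        have hxW : x ∈ W := compF_subset huW hx
        have hxv : x ≠ v := fun e => ((hWmem x).mp hxW) (e ▸ hvS')
        have hux : ReachIn G W x u := reachIn_symm (mem_compF.mp hx)
        have := hclaim2 x hxC hxv u hux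
        exact huC (Finset.mem_erase.mp this).2
      have hsub : compF G W u ⊆ Finset.univ \ C := by
        intro x hx
        exact Finset.mem_sdiff.mpr ⟨Finset.mem_univ _, hdis x hx⟩
      have h1 := Finset.card_le_card hsub
      rw [Finset.card_sdiff_of_subset (Finset.subset_univ _), Finset.card_univ, hcard] at h1
      have h2 : C.card ≤ n := by
        have := Finset.card_le_card (Finset.subset_univ C)
        rwa [Finset.card_univ, hcard] at this
      omega
  -- build the balanced partition
  have hWn : W.card ≤ n := by
    have := Finset.card_le_card (Finset.subset_univ W)
    rwa [Finset.card_univ, hcard] at this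
  obtain ⟨A, B, hABW, hABdisj, hABnoadj, h3A, h3B⟩ := part G n W hWn hcompbound
  -- S' is a balanced separator
  have hsep : IsBalancedSepOn G Finset.univ S' := by
    refine ⟨Finset.subset_univ _, A, B, Finset.subset_univ _, Finset.subset_univ _,
      hABdisj, ?_, ?_, ?_, hABnoadj, ?_, ?_⟩
    · rw [Finset.disjoint_left]
      intro a ha
      have : a ∈ W := by rw [← hABW]; exact Finset.mem_union_left _ ha
      exact (hWmem a).mp this
    · rw [Finset.disjoint_left]
      intro b hb
      have : b ∈ W := by rw [← hABW]; exact Finset.mem_union_right _ hb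
      exact (hWmem b).mp this
    · rw [hABW, hW]
      rw [Finset.sdiff_union_of_subset (Finset.subset_univ _)]
    · rw [Finset.card_univ, hcard]; exact h3A
    · rw [Finset.card_univ, hcard]; exact h3B
  have hs : S.card ≤ S'.card := hmin S' hsep
  -- S' is a clique in the contraction hierarchy
  have hclique : ∀ a ∈ S', ∀ b ∈ S', a ≠ b → (chGraph G π).Adj a b := by
    intro a ha b hb hab
    rcases Finset.mem_insert.mp ha with rfl | ha <;>
      rcases Finset.mem_insert.mp hb with h | hb
    · exact absurd h.symm hab
    · exact ((hnbrmem b).mp hb).1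
    · rw [h]; exact ((hnbrmem a).mp ha).1.symm
    · exact chGraph_fill G π ((hnbrmem a).mp ha).1.symm ((hnbrmem b).mp hb).1
        ((hnbrmem a).mp ha).2 ((hnbrmem b).mp hb).2 hab
  -- everything in S' is reachable from every vertex of C
  have hSreach : ∀ w ∈ C, ∀ y ∈ S', UpReach G π w y := by
    intro w hw y hy
    rcases Finset.mem_insert.mp hy with rfl | hy
    · exact hreach w hw
    · exact Relation.ReflTransGen.tail (hreach w hw)
        ⟨((hnbrmem y).mp hy).1, ((hnbrmem y).mp hy).2⟩
  -- vertex count bound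
  have hvert : ∀ w ∈ C, S'.card ≤ nVertsSS G π w := by
    intro w hw
    have hsub : (↑S' : Set V) ⊆ {u | UpReach G π w u} := by
      intro y hy
      exact hSreach w hw y hy
    calc S'.card = (↑S' : Set V).ncard := (Set.ncard_coe_finset _).symm
      _ ≤ _ := Set.ncard_le_ncard hsub (Set.toFinite _)
  -- arc count bound
  set PF : Finset (V × V) := (S' ×ˢ S').filter (fun q => rk π q.1 < rk π q.2) with hPF
  have hPFmem : ∀ q : V × V, q ∈ PF ↔ q.1 ∈ S' ∧ q.2 ∈ S' ∧ rk π q.1 < rk π q.2 := by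
    intro q; simp [hPF, Finset.mem_filter, Finset.mem_product]; tauto
  have hPFcard : 2 * PF.card = S'.card * S'.card - S'.card := by
    have hQP : (S'.offDiag).card = 2 * PF.card := by
      set QF : Finset (V × V) := (S' ×ˢ S').filter (fun q => rk π q.2 < rk π q.1) with hQF
      have hQFmem : ∀ q : V × V, q ∈ QF ↔ q.1 ∈ S' ∧ q.2 ∈ S' ∧ rk π q.2 < rk π q.1 := by
        intro q; simp [hQF, Finset.mem_filter, Finset.mem_product]; tauto
      have hdisj : Disjoint PF QF := by
        rw [Finset.disjoint_left]
        intro q hq hq2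
        have h1 := ((hPFmem q).mp hq).2.2
        have h2 := ((hQFmem q).mp hq2).2.2
        omega
      have hunion : PF ∪ QF = S'.offDiag := by
        ext q
        rw [Finset.mem_union, hPFmem, hQFmem, Finset.mem_offDiag]
        constructor
        · rintro (⟨h1, h2, h3⟩ | ⟨h1, h2, h3⟩)
          · exact ⟨h1, h2, fun e => by rw [e] at h3; omega⟩
          · exact ⟨h1, h2, fun e => by rw [e] at h3; omega⟩
        · rintro ⟨h1, h2, h3⟩
          have : rk π q.1 ≠ rk π q.2 := fun e => h3 (rk_inj π e)
          rcases Nat.lt_or_ge (rk π q.1) (rk π q.2) with h | h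
          · exact Or.inl ⟨h1, h2, h⟩
          · exact Or.inr ⟨h1, h2, by omega⟩
      have hcardQ : QF.card = PF.card := by
        refine Finset.card_bij' (fun q _ => Prod.swap q) (fun q _ => Prod.swap q) ?_ ?_ ?_ ?_
        · intro q hq
          rw [hQFmem] at hq
          rw [hPFmem]
          exact ⟨hq.2.1, hq.1, hq.2.2⟩
        · intro q hq
          rw [hPFmem] at hq
          rw [hQFmem]
          exact ⟨hq.2.1, hq.1, hq.2.2⟩
        · intro q _; simp
        · intro q _; simp
      rw [← hunion, Finset.card_union_of_disjoint hdisj, hcardQ]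
      omega
    rw [Finset.offDiag_card] at hQP
    omega
  have harc : ∀ w ∈ C, S'.card * S'.card - S'.card ≤ 2 * nArcsSS G π w := by
    intro w hw
    rw [← hPFcard]
    have hsub : (↑PF : Set (V × V)) ⊆ {q : V × V | (chGraph G π).Adj q.1 q.2 ∧
        rk π q.1 < rk π q.2 ∧ UpReach G π w q.1 ∧ UpReach G π w q.2} := by
      intro q hq
      rw [Finset.mem_coe, hPFmem] at hq
      obtain ⟨h1, h2, h3⟩ := hq
      have hne12 : q.1 ≠ q.2 := fun e => by rw [e] at h3; omega
      exact ⟨hclique q.1 h1 q.2 h2 hne12, h3, hSreach w hw q.1 h1, hSreach w hw q.2 h2⟩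
    have h1 : PF.card ≤ nArcsSS G π w := by
      calc PF.card = (↑PF : Set (V × V)).ncard := (Set.ncard_coe_finset _).symm
        _ ≤ _ := Set.ncard_le_ncard hsub (Set.toFinite _)
    omega
  -- monotonicity in s
  have hmono1 : S.card * (S.card - 1) ≤ S'.card * S'.card - S'.card := by
    have h1 : S.card * (S.card - 1) ≤ S'.card * (S'.card - 1) :=
      Nat.mul_le_mul hs (by omega)
    have h2 : S'.card * (S'.card - 1) = S'.card * S'.card - S'.card := by
      cases S'.card with
      | zero => simp
      | succ m => simp [Nat.succ_sub_one, Nat.mul_succ, Nat.succ_mul]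
    omega
  have hCn : C.card ≤ n := by
    have := Finset.card_le_card (Finset.subset_univ C)
    rwa [Finset.card_univ, hcard] at this
  refine ⟨⟨v, ?_, ?_⟩, ?_, ?_⟩
  · exact le_trans hs (hvert v hvC)
  · exact le_trans hmono1 (harc v hvC)
  · -- average vertex bound
    have h1 : C.card * S'.card ≤ ∑ w ∈ C, nVertsSS G π w := by
      calc C.card * S'.card = C.card • S'.card := by simp
        _ ≤ ∑ w ∈ C, nVertsSS G π w := Finset.card_nsmul_le_sum C _ _ hvert
    have h2 : ∑ w ∈ C, nVertsSS G π w ≤ ∑ w : V, nVertsSS G π w :=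
      Finset.sum_le_sum_of_subset (Finset.subset_univ C)
    have h3 : n * S.card ≤ (3 * C.card) * S'.card := by
      have := Nat.mul_le_mul (by omega : n ≤ 3 * C.card) hs
      omega
    calc n * S.card ≤ (3 * C.card) * S'.card := h3
      _ = 3 * (C.card * S'.card) := by ring
      _ ≤ 3 * ∑ w ∈ C, nVertsSS G π w := by omega
      _ ≤ 3 * ∑ w : V, nVertsSS G π w := by omega
  · -- average arc bound
    have h1 : C.card * (S'.card * S'.card - S'.card) ≤ ∑ w ∈ C, 2 * nArcsSS G π w := by
      calc C.card * (S'.card * S'.card - S'.card)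
          = C.card • (S'.card * S'.card - S'.card) := by simp
        _ ≤ ∑ w ∈ C, 2 * nArcsSS G π w := Finset.card_nsmul_le_sum C _ _ harc
    have h2 : ∑ w ∈ C, 2 * nArcsSS G π w = 2 * ∑ w ∈ C, nArcsSS G π w := by
      rw [Finset.mul_sum]
    have h3 : ∑ w ∈ C, nArcsSS G π w ≤ ∑ w : V, nArcsSS G π w :=
      Finset.sum_le_sum_of_subset (Finset.subset_univ C)
    have h4 : n * (S.card * (S.card - 1)) ≤ (3 * C.card) * (S'.card * S'.card - S'.card) := by
      have := Nat.mul_le_mul (by omega : n ≤ 3 * C.card) hmono1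
      omega
    calc n * (S.card * (S.card - 1)) ≤ (3 * C.card) * (S'.card * S'.card - S'.card) := h4
      _ = 3 * (C.card * (S'.card * S'.card - S'.card)) := by ring
      _ ≤ 3 * (2 * ∑ w ∈ C, nArcsSS G π w) := by omega
      _ = 6 * ∑ w ∈ C, nArcsSS G π w := by ring
      _ ≤ 6 * ∑ w : V, nArcsSS G π w := by omega
end
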